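/- The group H(ℤ) is not finitely generated. -/

import Mathlib

noncomputable section

abbrev SL2Z := Matrix.SpecialLinearGroup (Fin 2) ℤ

/-- The Möbius action of `A ∈ SL(2, ℤ)` on `x ∈ ℝ`. -/
def mobius (A : SL2Z) (x : ℝ) : ℝ :=
  ((A 0 0 : ℤ) * x + (A 0 1 : ℤ)) / ((A 1 0 : ℤ) * x + (A 1 1 : ℤ))

/-- The Möbius action of `A = !![a, b; c, d]` is defined at `x` if `c·x + d ≠ 0`. -/
def mobiusDefinedAt (A : SL2Z) (x : ℝ) : Prop :=
  ((A 1 0 : ℤ) : ℝ) * x + ((A 1 1 : ℤ) : ℝ) ≠ 0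

/-- `x` is a fixed point of `A = !![a, b; c, d]` if `a·x + b = x·(c·x + d)`. -/
def IsFixedPt (A : SL2Z) (x : ℝ) : Prop :=
  (A 0 0 : ℤ) * x + (A 0 1 : ℤ) = x * ((A 1 0 : ℤ) * x + (A 1 1 : ℤ))

/-- `A` is hyperbolic if `|a + d| > 2`. -/
def IsHyperbolic (A : SL2Z) : Prop := 2 < |A 0 0 + A 1 1|

/-- `P_ℤ` is the set of real fixed points of hyperbolic elements of SL(2, ℤ). -/
def PZ : Set ℝ := {x | ∃ A : SL2Z, IsHyperbolic A ∧ IsFixedPt A x}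

/-- A real number is a quadratic irrational if it is irrational and of the form
`u + v·√k` with `u, v ∈ ℚ` and `k` a positive nonsquare integer. -/
def IsQuadIrr (s : ℝ) : Prop :=
  Irrational s ∧
    ∃ (u v : ℚ) (k : ℕ), 0 < k ∧ ¬ IsSquare k ∧ s = (u : ℝ) + (v : ℝ) * Real.sqrt k

/-- `f` coincides on `S` with the (everywhere-defined) Möbius action of a single
element of SL(2, ℤ). -/
def MobiusLikeOn (f : ℝ → ℝ) (S : Set ℝ) : Prop :=
  ∃ A : SL2Z, ∀ y ∈ S, mobiusDefinedAt A y ∧ f y = mobius A y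

/-- Membership in the group `G̃` of piecewise-`PSL₂(ℤ)` homeomorphisms of the line:
a strictly increasing bijection of `ℝ` which, off a finite set `B`, coincides on each
connected component of `ℝ ∖ B` with the Möbius action of an element of SL(2, ℤ),
and which equals an integer translation near infinity. -/
def InGTilde (f : Equiv.Perm ℝ) : Prop :=
  StrictMono f ∧
  (∃ B : Finset ℝ, ∀ x : ℝ, x ∉ B →
    MobiusLikeOn f (connectedComponentIn ((↑B : Set ℝ)ᶜ) x)) ∧
  ∃ (n : ℤ) (M : ℝ), ∀ x : ℝ, M ≤ |x| → f x = x + (n : ℝ)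

/-- `x` is a break point of `f` if `f` does not coincide with the Möbius action of a
single element of SL(2, ℤ) on any neighbourhood of `x`. -/
def IsBreakPt (f : ℝ → ℝ) (x : ℝ) : Prop :=
  ¬ ∃ U ∈ nhds x, MobiusLikeOn f U

/-- Membership in Monod's group `H(ℤ)`: an element of `G̃` all of whose break points
lie in `P_ℤ`. -/
def InHZ (f : Equiv.Perm ℝ) : Prop :=
  InGTilde f ∧ ∀ x : ℝ, IsBreakPt f x → x ∈ PZ

/-- The orbit of `s` under the Möbius action of SL(2, ℤ) (where defined). -/
def orbitOf (s : ℝ) : Set ℝ :=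
  {x | ∃ A : SL2Z, mobiusDefinedAt A s ∧ x = mobius A s}

def den (A : SL2Z) (x : ℝ) : ℝ := ((A 1 0 : ℤ) : ℝ) * x + ((A 1 1 : ℤ) : ℝ)


lemma mobiusDefinedAt_iff (A : SL2Z) (x : ℝ) : mobiusDefinedAt A x ↔ den A x ≠ 0 := Iff.rfl


lemma mul_entry (A B : SL2Z) (i j : Fin 2) :
    (A * B) i j = A i 0 * B 0 j + A i 1 * B 1 j := by
  simp [Matrix.SpecialLinearGroup.coe_mul, Matrix.mul_apply, Fin.sum_univ_two]


lemma det_entry (A : SL2Z) : A 0 0 * A 1 1 - A 0 1 * A 1 0 = 1 := by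
  have := A.2
  rw [Matrix.det_fin_two] at this
  linarith


lemma den_mul (A B : SL2Z) (x : ℝ) (hB : den B x ≠ 0) :
    den (A * B) x = den A (mobius B x) * den B x := by
  simp only [den, mobius, mul_entry]
  simp only [den] at hB
  rw [← mul_div_assoc, div_add' _ _ _ hB, div_mul_cancel₀ _ hB]
  push_cast
  ring


lemma mobius_mul (A B : SL2Z) (x : ℝ) (hB : den B x ≠ 0) :
    mobius (A * B) x = mobius A (mobius B x) := by
  simp only [den, mobius, mul_entry] at *
  rw [← mul_div_assoc, ← mul_div_assoc, div_add' _ _ _ hB, div_add' _ _ _ hB,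
    div_div_div_cancel_right₀ hB]
  congr 1 <;> push_cast <;> ring


lemma mobius_one (x : ℝ) : mobius 1 x = x := by
  simp [mobius]


lemma den_one (x : ℝ) : den 1 x = 1 := by simp [den]


lemma den_inv_ne (A : SL2Z) (x : ℝ) (hA : den A x ≠ 0) :
    den A⁻¹ (mobius A x) ≠ 0 := by
  have h := den_mul A⁻¹ A x hA
  rw [inv_mul_cancel, den_one] at h
  intro h0
  rw [h0, zero_mul] at h
  exact one_ne_zero h


lemma mobius_inv (A : SL2Z) (x : ℝ) (hA : den A x ≠ 0) :
    mobius A⁻¹ (mobius A x) = x := by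
  have h := mobius_mul A⁻¹ A x hA
  rw [inv_mul_cancel, mobius_one] at h
  exact h.symm


lemma continuousAt_mobius (A : SL2Z) (x : ℝ) (hA : den A x ≠ 0) :
    ContinuousAt (mobius A) x := by
  apply ContinuousAt.div
  · fun_prop
  · fun_prop
  · exact hA


def QS (m : ℕ) : Set ℝ := {x | ∃ u v : ℚ, x = (u : ℝ) + (v : ℝ) * Real.sqrt m}


lemma irr_sqrt {m : ℕ} (hm : ¬ IsSquare m) : Irrational (Real.sqrt m) :=
  irrational_sqrt_natCast_iff.mpr hm


lemma QS_mobius {m : ℕ} (hm : ¬ IsSquare m) (A : SL2Z) {x : ℝ} (hx : x ∈ QS m)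
    (hd : den A x ≠ 0) : mobius A x ∈ QS m := by
  obtain ⟨u, v, rfl⟩ := hx
  set s : ℝ := Real.sqrt m with hs
  have hs2 : s ^ 2 = (m : ℝ) := Real.sq_sqrt (by positivity)
  have hsirr : Irrational s := irr_sqrt hm
  set a : ℚ := ((A 0 0 : ℤ) : ℚ) with ha
  set b : ℚ := ((A 0 1 : ℤ) : ℚ) with hb
  set c : ℚ := ((A 1 0 : ℤ) : ℚ) with hc
  set d : ℚ := ((A 1 1 : ℤ) : ℚ) with hd'
  set P : ℚ := c * u + d with hP
  set Q : ℚ := c * v with hQ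
  have hden : den A ((u : ℝ) + v * s) = (P : ℝ) + (Q : ℝ) * s := by
    simp only [den, hP, hQ, ha, hb, hc, hd']
    push_cast
    ring
  have hdPQ : (P : ℝ) + (Q : ℝ) * s ≠ 0 := by rw [← hden]; exact hd
  have hN : P ^ 2 - Q ^ 2 * m ≠ 0 := by
    intro h0
    have h0R : ((P : ℝ) + Q * s) * ((P : ℝ) - Q * s) = 0 := by
      have : ((P : ℝ)) ^ 2 - (Q : ℝ) ^ 2 * (m : ℝ) = 0 := by exact_mod_cast h0
      nlinarith [hs2]
    have h2 : (P : ℝ) - Q * s = 0 := by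
      rcases mul_eq_zero.mp h0R with h | h
      · exact absurd h hdPQ
      · exact h
    by_cases hQ0 : Q = 0
    · apply hdPQ
      rw [hQ0] at h2 ⊢
      push_cast at h2 ⊢
      simpa using h2
    · have : s = ((P / Q : ℚ) : ℝ) := by
        push_cast
        field_simp
        nlinarith [h2]
      exact hsirr ⟨P / Q, this.symm⟩
  set N : ℚ := P ^ 2 - Q ^ 2 * m with hNdef
  refine ⟨((a * u + b) * P - a * v * Q * m) / N, (a * v * P - (a * u + b) * Q) / N, ?_⟩
  set u' : ℚ := ((a * u + b) * P - a * v * Q * m) / N with hu'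
  set v' : ℚ := (a * v * P - (a * u + b) * Q) / N with hv'
  have hq1 : u' * P + v' * Q * m = a * u + b := by
    rw [hu', hv']
    field_simp
    ring
  have hq2 : u' * Q + v' * P = a * v := by
    rw [hu', hv']
    field_simp
    ring
  have h1 : (u' : ℝ) * P + (v' : ℝ) * Q * m = (a : ℝ) * u + b := by exact_mod_cast hq1
  have h2 : (u' : ℝ) * Q + (v' : ℝ) * P = (a : ℝ) * v := by exact_mod_cast hq2
  have hnum : ((A 0 0 : ℤ) : ℝ) * ((u : ℝ) + v * s) + ((A 0 1 : ℤ) : ℝ)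
      = ((a : ℝ) * u + b) + ((a : ℝ) * v) * s := by
    push_cast [ha, hb]
    ring
  rw [mobius, hnum]
  have : ((c : ℝ) * ((u : ℝ) + v * s) + d) = (P : ℝ) + Q * s := by
    push_cast [hP, hQ, hc, hd']
    ring
  have hdenx : ((A 1 0 : ℤ) : ℝ) * ((u : ℝ) + v * s) + ((A 1 1 : ℤ) : ℝ) = (P : ℝ) + Q * s := hden
  rw [hdenx, div_eq_iff hdPQ]
  linear_combination -h1 - s * h2 - (v' : ℝ) * (Q : ℝ) * hs2


lemma trace_sq_sub_four_not_square {t : ℤ} (ht : 2 < |t|) : ¬ IsSquare (t ^ 2 - 4) := by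
  rintro ⟨s, hs⟩
  have h3 : 3 ≤ |t| := ht
  have h1 : |t| ^ 2 = t ^ 2 := sq_abs t
  have hs' : |s| * |s| = t ^ 2 - 4 := by
    rw [← abs_mul, ← hs]
    have : (0:ℤ) ≤ t ^ 2 - 4 := by nlinarith
    exact abs_of_nonneg this
  set u := |t| with hu
  set w := |s| with hw
  have hw0 : 0 ≤ w := abs_nonneg s
  have hkey : w * w = u * u - 4 := by nlinarith
  have hlt : w < u := by nlinarith
  have hgt : u - 2 < w := by nlinarith
  have : w = u - 1 := by omega
  rw [this] at hkey
  nlinarith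

/-- Every point of `P_ℤ` lies in some `QS m` with `m` a nonsquare natural. -/


lemma PZ_subset_QS {x : ℝ} (hx : x ∈ PZ) : ∃ m : ℕ, ¬ IsSquare m ∧ x ∈ QS m := by
  obtain ⟨A, hA, hfix⟩ := hx
  set a : ℤ := A 0 0 with ha
  set b : ℤ := A 0 1 with hb
  set c : ℤ := A 1 0 with hc
  set d : ℤ := A 1 1 with hd
  have hdet : a * d - b * c = 1 := by have := det_entry A; linarith
  have htr : 2 < |a + d| := hA
  have hcne : c ≠ 0 := by
    intro h0
    rw [h0] at hdet
    simp only [mul_zero, sub_zero] at hdet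
    rcases Int.mul_eq_one_iff_eq_one_or_neg_one.mp hdet with ⟨h1, h2⟩ | ⟨h1, h2⟩ <;>
      rw [h1, h2] at htr <;> norm_num at htr
  set Δ : ℤ := (a + d) ^ 2 - 4 with hΔ
  have hΔpos : 0 < Δ := by
    have : 3 ≤ |a + d| := htr
    nlinarith [sq_abs (a + d)]
  set m : ℕ := Δ.toNat with hm
  have hmΔ : (m : ℤ) = Δ := Int.toNat_of_nonneg hΔpos.le
  have hmns : ¬ IsSquare m := by
    intro hsq
    apply trace_sq_sub_four_not_square htr
    obtain ⟨r, hr⟩ := hsq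
    exact ⟨(r : ℤ), by rw [← hΔ] at *; rw [← hmΔ]; exact_mod_cast hr⟩
  refine ⟨m, hmns, ?_⟩
  have hmR : ((m : ℕ) : ℝ) = ((Δ : ℤ) : ℝ) := by exact_mod_cast congrArg (fun z : ℤ => (z : ℝ)) hmΔ
  have hfix' : (c : ℝ) * x ^ 2 + ((d : ℝ) - a) * x - b = 0 := by
    simp only [IsFixedPt, ← ha, ← hb, ← hc, ← hd] at hfix
    nlinarith [hfix]
  have hdetR : (a : ℝ) * d - b * c = 1 := by exact_mod_cast hdet
  have key : (2 * (c : ℝ) * x + ((d : ℝ) - a)) ^ 2 = (m : ℝ) := by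
    rw [hmR, hΔ]
    push_cast
    linear_combination 4 * (c : ℝ) * hfix' - 4 * hdetR
  have hsq : (2 * (c : ℝ) * x + ((d : ℝ) - a)) ^ 2 = Real.sqrt m ^ 2 := by
    rw [key, Real.sq_sqrt (by positivity)]
  have hcR : (2 * (c : ℝ)) ≠ 0 := by
    simp only [ne_eq, mul_eq_zero]
    push_neg
    exact ⟨two_ne_zero, Int.cast_ne_zero.mpr hcne⟩
  have hcQ : (c : ℚ) ≠ 0 := Int.cast_ne_zero.mpr hcne
  rcases sq_eq_sq_iff_eq_or_eq_neg.mp hsq with h | h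
  · refine ⟨((a : ℚ) - d) / (2 * c), 1 / (2 * c), ?_⟩
    push_cast
    field_simp
    linarith
  · refine ⟨((a : ℚ) - d) / (2 * c), -(1 / (2 * c)), ?_⟩
    push_cast
    field_simp
    linarith


lemma prime_mul_not_square {p m : ℕ} (hp : p.Prime) (hm : 0 < m) (hlt : m < p) :
    ¬ IsSquare (p * m) := by
  rintro ⟨t, ht⟩
  have hdvd : p ∣ t := by
    have : p ∣ t * t := ⟨m, ht.symm⟩
    exact hp.dvd_of_dvd_pow (n := 2) (by rwa [sq])
  obtain ⟨r, rfl⟩ := hdvd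
  have : m = p * (r * r) := by
    have hp0 : 0 < p := hp.pos
    have : p * m = p * (p * (r * r)) := by rw [ht]; ring
    exact Nat.eq_of_mul_eq_mul_left hp0 this
  have : p ≤ m := by
    rcases Nat.eq_zero_or_pos (r * r) with h | h
    · rw [h, mul_zero] at this
      omega
    · calc p = p * 1 := (mul_one p).symm
        _ ≤ p * (r * r) := Nat.mul_le_mul_left p h
        _ = m := this.symm
  omega


lemma sqrt_prime_not_QS {p m : ℕ} (hp : p.Prime) (hm : ¬ IsSquare m) (hlt : m < p) :
    Real.sqrt p ∉ QS m := by
  rintro ⟨u, v, huv⟩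
  have hpirr : Irrational (Real.sqrt p) := hp.irrational_sqrt
  have hmirr : Irrational (Real.sqrt m) := irr_sqrt hm
  have hm0 : 0 < m := by
    rcases Nat.eq_zero_or_pos m with h | h
    · exact absurd (h ▸ (by exact ⟨0, rfl⟩ : IsSquare (0:ℕ))) hm
    · exact h
  have hv : v ≠ 0 := by
    rintro rfl
    exact hpirr ⟨u, by simpa using huv.symm⟩
  -- square both sides
  have hsqp : Real.sqrt p ^ 2 = (p : ℝ) := Real.sq_sqrt (by positivity)
  have hsqm : Real.sqrt m ^ 2 = (m : ℝ) := Real.sq_sqrt (by positivity)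
  have hsq : (p : ℝ) = (u : ℝ) ^ 2 + (v : ℝ) ^ 2 * m + 2 * u * v * Real.sqrt m := by
    rw [← hsqp, huv]
    linear_combination (v : ℝ) ^ 2 * hsqm
  have hu : u = 0 := by
    by_contra hu0
    have huv0 : (2 * u * v : ℝ) ≠ 0 := by
      push_cast
      simp only [ne_eq, mul_eq_zero]
      push_neg
      refine ⟨⟨two_ne_zero, by exact_mod_cast hu0⟩, by exact_mod_cast hv⟩
    apply hmirr
    refine ⟨((p : ℚ) - u ^ 2 - v ^ 2 * m) / (2 * u * v), ?_⟩
    push_cast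
    rw [div_eq_iff huv0]
    linarith [hsq]
  rw [hu] at hsq
  norm_num at hsq
  -- now (p : ℝ) = v^2 * m, so sqrt (p * m) = |v| * m is rational
  have hvm : Real.sqrt (p * m) = |(v : ℝ)| * m := by
    rw [Real.sqrt_mul (by positivity)]
    have h1 : Real.sqrt p = |(v : ℝ)| * Real.sqrt m := by
      have h2 : Real.sqrt p ^ 2 = (|(v : ℝ)| * Real.sqrt m) ^ 2 := by
        rw [hsqp, mul_pow, sq_abs, hsqm, hsq]
      have h3 : 0 ≤ Real.sqrt p := Real.sqrt_nonneg _
      have h4 : 0 ≤ |(v : ℝ)| * Real.sqrt m := by positivity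
      nlinarith
    rw [h1, mul_assoc, Real.mul_self_sqrt (by positivity)]
  have : ¬ Irrational (Real.sqrt (p * m)) := by
    rw [hvm]
    have : ((|v| * m : ℚ) : ℝ) = |(v:ℝ)| * m := by push_cast; ring
    rw [← this]
    exact Rat.not_irrational _
  apply this
  have h5 := irr_sqrt (prime_mul_not_square hp hm0 hlt)
  rwa [Nat.cast_mul] at h5


lemma mobius_lt_mobius (B : SL2Z) {x y : ℝ} (hx : 0 < den B x) (hy : 0 < den B y)
    (hxy : x < y) : mobius B x < mobius B y := by
  have hdet : (B 0 0 : ℝ) * (B 1 1 : ℝ) - (B 0 1 : ℝ) * (B 1 0 : ℝ) = 1 := by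
    exact_mod_cast det_entry B
  simp only [den] at hx hy
  rw [mobius, mobius, div_lt_div_iff₀ hx hy]
  have key : ((B 0 0 : ℝ) * y + (B 0 1)) * ((B 1 0 : ℝ) * x + (B 1 1)) -
      ((B 0 0 : ℝ) * x + (B 0 1)) * ((B 1 0 : ℝ) * y + (B 1 1)) = y - x := by
    linear_combination (y - x) * hdet
  nlinarith [key]


lemma MobiusLikeOn_mono {f : ℝ → ℝ} {S T : Set ℝ} (h : S ⊆ T) (hT : MobiusLikeOn f T) :
    MobiusLikeOn f S := by
  obtain ⟨A, hA⟩ := hT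
  exact ⟨A, fun y hy => hA y (h hy)⟩

-- ######## the Pell element


set_option maxHeartbeats 2000000 in
theorem pell_element_exists (p : ℕ) (hpns : ¬ IsSquare p) :
    ∃ f : Equiv.Perm ℝ, InHZ f ∧ ∀ U ∈ nhds (Real.sqrt p), ¬ MobiusLikeOn ⇑f U := by
  have hp0 : 0 < p := by
    rcases Nat.eq_zero_or_pos p with h | h
    · exact absurd (h ▸ ⟨0, rfl⟩) hpns
    · exact h
  obtain ⟨X, Y, hXY, hY⟩ := Pell.exists_of_not_isSquare (d := (p : ℤ))
    (by exact_mod_cast hp0) (fun hsq => hpns (Int.isSquare_natCast_iff.mp hsq))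
  set a : ℤ := |X| with haX
  set c : ℤ := |Y| with hcY
  have hdet : a * a - c * c * (p : ℤ) = 1 := by
    have h1 : a * a = X * X := by rw [haX, ← abs_mul, abs_of_nonneg (by nlinarith [sq_nonneg X])]
    have h2 : c * c = Y * Y := by rw [hcY, ← abs_mul, abs_of_nonneg (by nlinarith [sq_nonneg Y])]
    rw [h1, h2]
    nlinarith [hXY]
  have hc : 0 < c := abs_pos.mpr hY
  have ha : 1 < a := by nlinarith [hp0, hc, abs_nonneg X]
  set A : SL2Z := ⟨!![a, c * p; c, a], by rw [Matrix.det_fin_two_of]; linarith⟩ with hAdef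
  have hA00 : A 0 0 = a := rfl
  have hA01 : A 0 1 = c * p := rfl
  have hA10 : A 1 0 = c := rfl
  have hA11 : A 1 1 = a := rfl
  set s : ℝ := Real.sqrt p with hsdef
  have hs0 : 0 < s := Real.sqrt_pos.mpr (by exact_mod_cast hp0)
  have hs2 : s ^ 2 = (p : ℝ) := Real.sq_sqrt (by positivity)
  have haR : (1:ℝ) < (a:ℝ) := by exact_mod_cast ha
  have hcR : (0:ℝ) < (c:ℝ) := by exact_mod_cast hc
  have hdetR : (a:ℝ) * a - (c:ℝ) * c * (p:ℝ) = 1 := by exact_mod_cast hdet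
  have hacs : (c : ℝ) * s < (a : ℝ) := by
    nlinarith [mul_pos hcR hs0, hs2]
  have denA_eq : ∀ x : ℝ, den A x = (c:ℝ) * x + (a:ℝ) := by
    intro x
    show ((A 1 0 : ℤ) : ℝ) * x + ((A 1 1 : ℤ) : ℝ) = _
    rw [hA10, hA11]
  have mobA_eq : ∀ x : ℝ, mobius A x = ((a:ℝ) * x + (c:ℝ) * (p:ℝ)) / ((c:ℝ) * x + (a:ℝ)) := by
    intro x
    show (((A 0 0 : ℤ) : ℝ) * x + ((A 0 1 : ℤ) : ℝ)) / (((A 1 0 : ℤ) : ℝ) * x + ((A 1 1 : ℤ) : ℝ)) = _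
    rw [hA00, hA01, hA10, hA11]
    push_cast
    ring
  have e10 : (A⁻¹) 1 0 = -A 1 0 := by rw [Matrix.SpecialLinearGroup.SL2_inv_expl]; rfl
  have e11 : (A⁻¹) 1 1 = A 0 0 := by rw [Matrix.SpecialLinearGroup.SL2_inv_expl]; rfl
  have denAinv_eq : ∀ x : ℝ, den A⁻¹ x = -((c:ℝ)) * x + (a:ℝ) := by
    intro x
    show (((A⁻¹) 1 0 : ℤ) : ℝ) * x + (((A⁻¹) 1 1 : ℤ) : ℝ) = _
    rw [e10, e11, hA10, hA00]
    push_cast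
    ring
  have hhyp : IsHyperbolic A := by
    rw [IsHyperbolic, hA00, hA11]
    rw [abs_of_pos (by linarith)]
    linarith
  have hfp : ∀ x : ℝ, x ^ 2 = (p:ℝ) → IsFixedPt A x := by
    intro x hx
    show ((A 0 0 : ℤ) : ℝ) * x + ((A 0 1 : ℤ) : ℝ) = x * (((A 1 0 : ℤ) : ℝ) * x + ((A 1 1 : ℤ) : ℝ))
    rw [hA00, hA01, hA10, hA11]
    push_cast
    linear_combination -(c:ℝ) * hx
  clear hAdef hA00 hA01 hA10 hA11
  clear_value A
  clear hXY hY haX hcY hdet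
  have hdenA : ∀ x : ℝ, -s ≤ x → 0 < den A x := by
    intro x hx
    rw [denA_eq]
    nlinarith
  have hdenAinv : ∀ x : ℝ, x ≤ s → 0 < den A⁻¹ x := by
    intro x hx
    rw [denAinv_eq]
    nlinarith
  have hfixs : mobius A s = s := by
    rw [mobA_eq, div_eq_iff (by nlinarith)]
    linear_combination -(c:ℝ) * hs2
  have hfixns : mobius A (-s) = -s := by
    rw [mobA_eq, div_eq_iff (by nlinarith)]
    linear_combination -(c:ℝ) * hs2
  have hmonoA_le : ∀ x y : ℝ, -s ≤ x → -s ≤ y → x ≤ y → mobius A x ≤ mobius A y := by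
    intro x y hx hy hxy
    rcases eq_or_lt_of_le hxy with rfl | h
    · exact le_rfl
    · exact (mobius_lt_mobius A (hdenA x hx) (hdenA y hy) h).le
  have hmonoAinv_le : ∀ x y : ℝ, x ≤ s → y ≤ s → x ≤ y → mobius A⁻¹ x ≤ mobius A⁻¹ y := by
    intro x y hx hy hxy
    rcases eq_or_lt_of_le hxy with rfl | h
    · exact le_rfl
    · exact (mobius_lt_mobius A⁻¹ (hdenAinv x hx) (hdenAinv y hy) h).le
  have hmaps : ∀ x : ℝ, x ∈ Set.Icc (-s) s → mobius A x ∈ Set.Icc (-s) s := by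
    intro x hx
    constructor
    · rw [← hfixns]; exact hmonoA_le _ _ le_rfl hx.1 hx.1
    · rw [← hfixs]; exact hmonoA_le _ _ hx.1 (by linarith [hs0]) hx.2
  have hfixs_inv : mobius A⁻¹ s = s := by
    have h := mobius_inv A s (hdenA s (by linarith)).ne'
    rwa [hfixs] at h
  have hfixns_inv : mobius A⁻¹ (-s) = -s := by
    have h := mobius_inv A (-s) (hdenA (-s) le_rfl).ne'
    rwa [hfixns] at h
  have hmaps_inv : ∀ x : ℝ, x ∈ Set.Icc (-s) s → mobius A⁻¹ x ∈ Set.Icc (-s) s := by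
    intro x hx
    constructor
    · rw [← hfixns_inv]; exact hmonoAinv_le _ _ (by linarith [hs0]) hx.2 hx.1
    · rw [← hfixs_inv]; exact hmonoAinv_le _ _ hx.2 le_rfl hx.2
  have hgt : ∀ x : ℝ, -s < x → x < s → x < mobius A x := by
    intro x h1 h2
    have h3 : (c:ℝ) * (-s) < c * x := mul_lt_mul_of_pos_left h1 hcR
    have hdx : (0:ℝ) < (c:ℝ) * x + a := by nlinarith [hacs, h3]
    have hx2 : x * x < (p:ℝ) := by nlinarith [hs2]
    have hkey := mul_lt_mul_of_pos_left hx2 hcR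
    rw [mobA_eq, lt_div_iff₀ hdx]
    nlinarith [hkey]
  classical
  set F : ℝ → ℝ := fun x => if x ∈ Set.Icc (-s) s then mobius A x else x with hFdef
  set G : ℝ → ℝ := fun x => if x ∈ Set.Icc (-s) s then mobius A⁻¹ x else x with hGdef
  have hFin : ∀ x ∈ Set.Icc (-s) s, F x = mobius A x := by
    intro x hx; simp only [hFdef]; rw [if_pos hx]
  have hFout : ∀ x : ℝ, x ∉ Set.Icc (-s) s → F x = x := by
    intro x hx; simp only [hFdef]; rw [if_neg hx]
  have hGin : ∀ x ∈ Set.Icc (-s) s, G x = mobius A⁻¹ x := by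
    intro x hx; simp only [hGdef]; rw [if_pos hx]
  have hGout : ∀ x : ℝ, x ∉ Set.Icc (-s) s → G x = x := by
    intro x hx; simp only [hGdef]; rw [if_neg hx]
  have hleft : Function.LeftInverse G F := by
    intro x
    by_cases hx : x ∈ Set.Icc (-s) s
    · rw [hFin x hx, hGin _ (hmaps x hx), mobius_inv A x (hdenA x hx.1).ne']
    · rw [hFout x hx, hGout x hx]
  have hright : Function.RightInverse G F := by
    intro x
    by_cases hx : x ∈ Set.Icc (-s) s
    · rw [hGin x hx, hFin _ (hmaps_inv x hx)]
      have h := mobius_inv A⁻¹ x (hdenAinv x hx.2).ne'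
      rwa [inv_inv] at h
    · rw [hGout x hx, hFout x hx]
  set f : Equiv.Perm ℝ := ⟨F, G, hleft, hright⟩ with hfdef
  have hfcoe : ⇑f = F := rfl
  have hFmono : StrictMono F := by
    intro x y hxy
    by_cases hx : x ∈ Set.Icc (-s) s <;> by_cases hy : y ∈ Set.Icc (-s) s
    · rw [hFin x hx, hFin y hy]
      exact mobius_lt_mobius A (hdenA x hx.1) (hdenA y hy.1) hxy
    · rw [hFin x hx, hFout y hy]
      have hys : s < y := by
        simp only [Set.mem_Icc, not_and_or, not_le] at hy
        rcases hy with h | h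
        · linarith [hx.1]
        · exact h
      calc mobius A x ≤ s := by rw [← hfixs]; exact hmonoA_le _ _ hx.1 (by linarith) hx.2
        _ < y := hys
    · rw [hFout x hx, hFin y hy]
      have hxs : x < -s := by
        simp only [Set.mem_Icc, not_and_or, not_le] at hx
        rcases hx with h | h
        · exact h
        · linarith [hy.2]
      calc x < -s := hxs
        _ ≤ mobius A y := by rw [← hfixns]; exact hmonoA_le _ _ le_rfl hy.1 hy.1
    · rw [hFout x hx, hFout y hy]
      exact hxy
  have hlike_left : MobiusLikeOn F (Set.Iio (-s)) := by
    refine ⟨1, fun y hy => ⟨?_, ?_⟩⟩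
    · rw [mobiusDefinedAt_iff, den_one]; norm_num
    · rw [hFout y (by simp only [Set.mem_Icc, not_and_or, not_le]; left; exact hy), mobius_one]
  have hlike_right : MobiusLikeOn F (Set.Ioi s) := by
    refine ⟨1, fun y hy => ⟨?_, ?_⟩⟩
    · rw [mobiusDefinedAt_iff, den_one]; norm_num
    · rw [hFout y (by simp only [Set.mem_Icc, not_and_or, not_le]; right; exact hy), mobius_one]
  have hlike_mid : MobiusLikeOn F (Set.Ioo (-s) s) := by
    refine ⟨A, fun y hy => ⟨?_, ?_⟩⟩
    · rw [mobiusDefinedAt_iff]; exact (hdenA y hy.1.le).ne'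
    · exact hFin y ⟨hy.1.le, hy.2.le⟩
  have hGT : InGTilde f := by
    refine ⟨hFmono, ⟨{-s, s}, ?_⟩, 0, s + 1, ?_⟩
    · intro x hx
      have hxns : x ≠ -s := fun h => hx (by rw [h]; exact Finset.mem_insert_self _ _)
      have hxs : x ≠ s := fun h => hx (by rw [h]; simp)
      set Bset : Set ℝ := (↑({-s, s} : Finset ℝ) : Set ℝ) with hB
      have hxB : x ∈ Bsetᶜ := fun hmem => hx (by exact_mod_cast hmem)
      have hC2 : connectedComponentIn Bsetᶜ x ⊆ Bsetᶜ := connectedComponentIn_subset _ _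
      have hC3 : x ∈ connectedComponentIn Bsetᶜ x := mem_connectedComponentIn hxB
      have hOrd : Set.OrdConnected (connectedComponentIn Bsetᶜ x) :=
        (isPreconnected_connectedComponentIn).ordConnected
      have hns_mem : -s ∈ Bset := by simp [hB]
      have hs_mem : s ∈ Bset := by simp [hB]
      have hsep : ∀ b : ℝ, b ∈ Bset → ∀ y ∈ connectedComponentIn Bsetᶜ x,
          (x < b → y < b) ∧ (b < x → b < y) := by
        intro b hb y hy
        constructor
        · intro hxb
          by_contra hyb
          push_neg at hyb
          exact (hC2 (hOrd.out hC3 hy ⟨hxb.le, hyb⟩)) hb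
        · intro hbx
          by_contra hyb
          push_neg at hyb
          exact (hC2 (hOrd.out hy hC3 ⟨hyb, hbx.le⟩)) hb
      rcases lt_trichotomy x (-s) with hlt | heq | hgt1
      · exact MobiusLikeOn_mono
          (fun y hy => (hsep _ hns_mem y hy).1 hlt) hlike_left
      · exact absurd heq hxns
      · rcases lt_trichotomy x s with hlt2 | heq2 | hgt2
        · exact MobiusLikeOn_mono (fun y hy => Set.mem_Ioo.mpr
            ⟨(hsep _ hns_mem y hy).2 hgt1, (hsep _ hs_mem y hy).1 hlt2⟩) hlike_mid
        · exact absurd heq2 hxs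
        · exact MobiusLikeOn_mono
            (fun y hy => (hsep _ hs_mem y hy).2 hgt2) hlike_right
    · intro x hx
      have hout : x ∉ Set.Icc (-s) s := by
        rcases le_abs.mp hx with h | h
        · simp only [Set.mem_Icc, not_and_or, not_le]
          right; linarith
        · simp only [Set.mem_Icc, not_and_or, not_le]
          left; linarith
      show F x = x + ((0:ℤ):ℝ)
      rw [hFout x hout]
      norm_num
  have hHZ : InHZ f := by
    refine ⟨hGT, ?_⟩
    intro x hbp
    rcases lt_trichotomy x (-s) with hlt | heq | hgt1
    · exact absurd ⟨Set.Iio (-s), isOpen_Iio.mem_nhds hlt, hlike_left⟩ hbp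
    · exact ⟨A, hhyp, heq ▸ hfp (-s) (by rw [neg_pow]; simp [hs2])⟩
    · rcases lt_trichotomy x s with hlt2 | heq2 | hgt2
      · exact absurd ⟨Set.Ioo (-s) s, isOpen_Ioo.mem_nhds ⟨hgt1, hlt2⟩, hlike_mid⟩ hbp
      · exact ⟨A, hhyp, heq2 ▸ hfp s hs2⟩
      · exact absurd ⟨Set.Ioi s, isOpen_Ioi.mem_nhds hgt2, hlike_right⟩ hbp
  refine ⟨f, hHZ, ?_⟩
  rintro U hU ⟨C, hC⟩
  obtain ⟨ε, hε, hball⟩ := Metric.mem_nhds_iff.mp hU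
  set α : ℝ := ((C 0 0 : ℤ) : ℝ) with hα
  set β : ℝ := ((C 0 1 : ℤ) : ℝ) with hβ'
  set γ : ℝ := ((C 1 0 : ℤ) : ℝ) with hγ'
  set δ : ℝ := ((C 1 1 : ℤ) : ℝ) with hδ'
  have hmem : ∀ t : ℝ, 0 < t → t < ε → s + t ∈ U := by
    intro t ht1 ht2
    apply hball
    rw [Metric.mem_ball, Real.dist_eq]
    rw [abs_of_pos (by linarith)]
    linarith
  have hfix3 : ∀ t : ℝ, 0 < t → t < ε →
      α * (s + t) + β = (s + t) * (γ * (s + t) + δ) ∧ γ * (s + t) + δ ≠ 0 := by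
    intro t ht1 ht2
    obtain ⟨hdef, heq⟩ := hC (s + t) (hmem t ht1 ht2)
    have hne : γ * (s + t) + δ ≠ 0 := hdef
    have hout : s + t ∉ Set.Icc (-s) s := by
      simp only [Set.mem_Icc, not_and_or, not_le]
      right; linarith
    rw [hfcoe, hFout _ hout] at heq
    rw [mobius] at heq
    rw [eq_comm, div_eq_iff hne] at heq
    exact ⟨heq, hne⟩
  obtain ⟨e1, hd1⟩ := hfix3 (ε/4) (by linarith) (by linarith)
  obtain ⟨e2, _⟩ := hfix3 (ε/3) (by linarith) (by linarith)
  obtain ⟨e3, _⟩ := hfix3 (ε/2) (by linarith) (by linarith)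
  have h12 : ((s + ε/4) - (s + ε/3)) * (γ * ((s + ε/4) + (s + ε/3)) + (δ - α)) = 0 := by
    linear_combination e2 - e1
  have h23 : ((s + ε/3) - (s + ε/2)) * (γ * ((s + ε/3) + (s + ε/2)) + (δ - α)) = 0 := by
    linear_combination e3 - e2
  have g12 : γ * ((s + ε/4) + (s + ε/3)) + (δ - α) = 0 :=
    (mul_eq_zero.mp h12).resolve_left (by intro h; nlinarith)
  have g23 : γ * ((s + ε/3) + (s + ε/2)) + (δ - α) = 0 :=
    (mul_eq_zero.mp h23).resolve_left (by intro h; nlinarith)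
  have hγ0 : γ = 0 := by
    have h13 : γ * (ε/2 - ε/4) = 0 := by linear_combination g23 - g12
    rcases mul_eq_zero.mp h13 with h | h
    · exact h
    · nlinarith
  have hδα : δ = α := by
    rw [hγ0] at g12
    linarith
  have hβ0 : β = 0 := by
    rw [hγ0, hδα] at e1
    nlinarith [e1]
  have hδ0 : δ ≠ 0 := by
    rw [hγ0] at hd1
    simpa using hd1
  set y0 : ℝ := max (s - ε/2) 0 with hy0
  have hy0lt : y0 < s := max_lt (by linarith) hs0
  have hy0gt : -s < y0 := lt_of_lt_of_le (by linarith) (le_max_right _ _)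
  have hy0U : y0 ∈ U := by
    have h1 : s - ε/2 ≤ y0 := le_max_left _ _
    apply hball
    rw [Metric.mem_ball, Real.dist_eq, abs_of_nonpos (by linarith)]
    linarith
  obtain ⟨hdef0, heq0⟩ := hC y0 hy0U
  have hCy0 : mobius C y0 = y0 := by
    show (α * y0 + β) / (γ * y0 + δ) = y0
    rw [hβ0, hγ0, hδα]
    field_simp [hδα ▸ hδ0]
    ring
  have hFy0 : F y0 = mobius A y0 := hFin y0 ⟨hy0gt.le, hy0lt.le⟩
  have hgt0 : y0 < mobius A y0 := hgt y0 hy0gt hy0lt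
  rw [hfcoe, hFy0, hCy0] at heq0
  linarith [heq0, hgt0]


lemma breakPt_mem {g : Equiv.Perm ℝ} {B : Finset ℝ}
    (hB : ∀ x : ℝ, x ∉ B → MobiusLikeOn ⇑g (connectedComponentIn ((↑B : Set ℝ)ᶜ) x))
    {x : ℝ} (hbp : IsBreakPt ⇑g x) : x ∈ B := by
  by_contra hxB
  have hxB' : x ∈ ((↑B : Set ℝ)ᶜ) := fun h => hxB (by exact_mod_cast h)
  have hopen : IsOpen (connectedComponentIn ((↑B : Set ℝ)ᶜ) x) :=
    (B.finite_toSet.isClosed.isOpen_compl).connectedComponentIn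
  exact hbp ⟨_, hopen.mem_nhds (mem_connectedComponentIn hxB'), hB x hxB⟩

/-- any member of G-tilde is pointwise given by some Möbius map. -/


lemma pointwise_mobius (g : Equiv.Perm ℝ) (hmono : StrictMono ⇑g) {B : Finset ℝ}
    (hB : ∀ x : ℝ, x ∉ B → MobiusLikeOn ⇑g (connectedComponentIn ((↑B : Set ℝ)ᶜ) x))
    (z : ℝ) : ∃ A : SL2Z, den A z ≠ 0 ∧ g z = mobius A z := by
  classical
  have hcont : Continuous ⇑g :=
    (StrictMono.orderIsoOfSurjective ⇑g hmono g.surjective).toHomeomorph.continuous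
  -- find δ > 0 with Ioo z (z+δ) disjoint from B
  obtain ⟨δ, hδ0, hδ⟩ : ∃ δ : ℝ, 0 < δ ∧ ∀ b ∈ B, b ∉ Set.Ioo z (z + δ) := by
    by_cases hne : (B.filter (fun b => z < b)).Nonempty
    · refine ⟨(B.filter (fun b => z < b)).min' hne - z, ?_, ?_⟩
      · have := Finset.min'_mem _ hne
        rw [Finset.mem_filter] at this
        linarith [this.2]
      · intro b hb hbmem
        have hzb : z < b := hbmem.1
        have : (B.filter (fun b => z < b)).min' hne ≤ b :=
          Finset.min'_le _ _ (Finset.mem_filter.mpr ⟨hb, hzb⟩)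
        have := hbmem.2
        linarith
    · refine ⟨1, one_pos, fun b hb hbmem => ?_⟩
      exact hne ⟨b, Finset.mem_filter.mpr ⟨hb, hbmem.1⟩⟩
  obtain ⟨w, hw1, hw2⟩ : ∃ w : ℝ, z < w ∧ w < z + δ := ⟨z + δ / 2, by linarith, by linarith⟩
  have hwB : w ∉ B := fun h => hδ w h ⟨hw1, hw2⟩
  obtain ⟨A, hA⟩ := hB w hwB
  have hsub : Set.Ioo z (z + δ) ⊆ connectedComponentIn ((↑B : Set ℝ)ᶜ) w := by
    apply IsPreconnected.subset_connectedComponentIn isPreconnected_Ioo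
    · exact ⟨hw1, hw2⟩
    · intro y hy h
      exact hδ y (by exact_mod_cast h) hy
  have hIoo : Set.Ioo z (z + δ) ∈ nhdsWithin z (Set.Ioi z) :=
    Ioo_mem_nhdsGT_of_mem ⟨le_refl z, by linarith⟩
  have hfto : Filter.Tendsto ⇑g (nhdsWithin z (Set.Ioi z)) (nhds (g z)) :=
    (hcont.tendsto z).mono_left nhdsWithin_le_nhds
  have hEq : ∀ᶠ y in nhdsWithin z (Set.Ioi z), ⇑g y = mobius A y := by
    filter_upwards [hIoo] with y hy
    exact (hA y (hsub hy)).2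
  have h1 : Filter.Tendsto (mobius A) (nhdsWithin z (Set.Ioi z)) (nhds (g z)) :=
    hfto.congr' hEq
  have hdencont : Filter.Tendsto (fun y => den A y) (nhdsWithin z (Set.Ioi z))
      (nhds (den A z)) := by
    apply Filter.Tendsto.mono_left _ nhdsWithin_le_nhds
    exact (Continuous.tendsto (by unfold den; fun_prop) z)
  have h2 : Filter.Tendsto (fun y => mobius A y * den A y) (nhdsWithin z (Set.Ioi z))
      (nhds (g z * den A z)) := h1.mul hdencont
  have hEq2 : ∀ᶠ y in nhdsWithin z (Set.Ioi z),
      mobius A y * den A y = ((A 0 0 : ℤ) : ℝ) * y + ((A 0 1 : ℤ) : ℝ) := by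
    filter_upwards [hIoo] with y hy
    have hden : den A y ≠ 0 := (hA y (hsub hy)).1
    rw [mobius]
    exact div_mul_cancel₀ _ hden
  have h3 : Filter.Tendsto (fun y => ((A 0 0 : ℤ) : ℝ) * y + ((A 0 1 : ℤ) : ℝ))
      (nhdsWithin z (Set.Ioi z)) (nhds (((A 0 0 : ℤ) : ℝ) * z + ((A 0 1 : ℤ) : ℝ))) := by
    apply Filter.Tendsto.mono_left _ nhdsWithin_le_nhds
    exact (Continuous.tendsto (by fun_prop) z)
  have huniq : g z * den A z = ((A 0 0 : ℤ) : ℝ) * z + ((A 0 1 : ℤ) : ℝ) :=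
    tendsto_nhds_unique (h2.congr' hEq2) h3
  have hdetR : ((A 0 0 : ℤ) : ℝ) * ((A 1 1 : ℤ) : ℝ) - ((A 0 1 : ℤ) : ℝ) * ((A 1 0 : ℤ) : ℝ) = 1 := by
    have h := A.2
    rw [Matrix.det_fin_two] at h
    exact_mod_cast h
  have hdenne : den A z ≠ 0 := by
    intro h0
    have hnum : ((A 0 0 : ℤ) : ℝ) * z + ((A 0 1 : ℤ) : ℝ) = 0 := by
      rw [← huniq, h0, mul_zero]
    have : ((A 0 0 : ℤ) : ℝ) * den A z - ((A 1 0 : ℤ) : ℝ) *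
        (((A 0 0 : ℤ) : ℝ) * z + ((A 0 1 : ℤ) : ℝ)) = 1 := by
      rw [den]
      linear_combination hdetR
    rw [h0, hnum] at this
    norm_num at this
  refine ⟨A, hdenne, ?_⟩
  have hdenne' : (((A 1 0 : ℤ) : ℝ) * z + ((A 1 1 : ℤ) : ℝ)) ≠ 0 := hdenne
  rw [mobius, eq_div_iff hdenne']
  exact huniq


/-- The group `H(ℤ)` is not finitely generated: no finite subset of `H(ℤ)` generates a
subgroup (of the permutation group of `ℝ`) containing all of `H(ℤ)`. -/
theorem HZ_not_finitely_generated :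
    ¬ ∃ S : Finset (Equiv.Perm ℝ), (∀ g ∈ S, InHZ g) ∧
      ∀ f : Equiv.Perm ℝ, InHZ f → f ∈ Subgroup.closure (↑S : Set (Equiv.Perm ℝ)) := by
  rintro ⟨S, hS, hgen⟩
  classical
  -- break-set data for the generators
  set Bg : Equiv.Perm ℝ → Finset ℝ := fun g =>
    if h : ∃ B : Finset ℝ, ∀ x : ℝ, x ∉ B →
        MobiusLikeOn ⇑g (connectedComponentIn ((↑B : Set ℝ)ᶜ) x) then h.choose else ∅
    with hBgdef
  have hBg : ∀ g ∈ S, ∀ x : ℝ, x ∉ Bg g →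
      MobiusLikeOn ⇑g (connectedComponentIn ((↑(Bg g) : Set ℝ)ᶜ) x) := by
    intro g hg
    have h := (hS g hg).1.2.1
    simp only [hBgdef, dif_pos h]
    exact h.choose_spec
  -- quadratic data
  set μ : ℝ → ℕ := fun x =>
    if h : ∃ m : ℕ, ¬ IsSquare m ∧ x ∈ QS m then h.choose else 0 with hμdef
  have hμ : ∀ x ∈ PZ, ¬ IsSquare (μ x) ∧ x ∈ QS (μ x) := by
    intro x hx
    have h := PZ_subset_QS hx
    simp only [hμdef, dif_pos h]
    exact h.choose_spec
  set T : Finset ℝ := S.biUnion Bg with hT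
  set M : Finset ℕ := T.image μ with hM
  set V : Set ℝ := {x | ∃ m ∈ M, ¬ IsSquare m ∧ x ∈ QS m} with hV
  have hVfor : ∀ (A : SL2Z) (x : ℝ), x ∈ V → den A x ≠ 0 → mobius A x ∈ V := by
    rintro A x ⟨m, hmM, hmns, hmQ⟩ hden
    exact ⟨m, hmM, hmns, QS_mobius hmns A hmQ hden⟩
  have hVback : ∀ (A : SL2Z) (x : ℝ), x ∉ V → den A x ≠ 0 → mobius A x ∉ V := by
    rintro A x hx hden ⟨m, hmM, hmns, hmQ⟩
    apply hx
    refine ⟨m, hmM, hmns, ?_⟩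
    have h1 := QS_mobius hmns A⁻¹ hmQ (den_inv_ne A x hden)
    rwa [mobius_inv A x hden] at h1
  set Good : Equiv.Perm ℝ → Prop :=
    fun g => ∀ x : ℝ, x ∉ V → ∃ U ∈ nhds x, MobiusLikeOn ⇑g U with hGood
  have hGood_one : Good 1 := by
    intro x hx
    refine ⟨Set.univ, Filter.univ_mem, 1, fun y _ => ⟨?_, ?_⟩⟩
    · rw [mobiusDefinedAt_iff, den_one]; norm_num
    · rw [mobius_one]; rfl
  have hGood_mul : ∀ f g : Equiv.Perm ℝ, Good f → Good g → Good (f * g) := by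
    intro f g hf hg x hx
    obtain ⟨U, hU, B, hB⟩ := hg x hx
    obtain ⟨hdBx, hgx⟩ := hB x (mem_of_mem_nhds hU)
    have hgxV : mobius B x ∉ V := hVback B x hx hdBx
    obtain ⟨U', hU', A, hA⟩ := hf (mobius B x) hgxV
    have hpre : (mobius B) ⁻¹' U' ∈ nhds x :=
      (continuousAt_mobius B x hdBx).preimage_mem_nhds hU'
    refine ⟨U ∩ (mobius B) ⁻¹' U', Filter.inter_mem hU hpre, A * B, ?_⟩
    rintro y ⟨hyU, hyU'⟩
    obtain ⟨hdBy, hgy⟩ := hB y hyU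
    obtain ⟨hdA, hfy⟩ := hA (mobius B y) hyU'
    constructor
    · rw [mobiusDefinedAt_iff, den_mul A B y hdBy]
      exact mul_ne_zero hdA hdBy
    · rw [Equiv.Perm.mul_apply, hgy, hfy, mobius_mul A B y hdBy]
  have hGood_gen : ∀ g ∈ S, Good g := by
    intro g hg x hx
    by_cases hbp : IsBreakPt ⇑g x
    · exfalso
      have hxPZ : x ∈ PZ := (hS g hg).2 x hbp
      have hxB : x ∈ Bg g := breakPt_mem (hBg g hg) hbp
      exact hx ⟨μ x, Finset.mem_image_of_mem μ (Finset.mem_biUnion.mpr ⟨g, hg, hxB⟩),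
        (hμ x hxPZ).1, (hμ x hxPZ).2⟩
    · exact not_not.mp hbp
  have hGood_inv_gen : ∀ g ∈ S, Good g⁻¹ := by
    intro g hg x hx
    have hmono : StrictMono ⇑g := (hS g hg).1.1
    set z : ℝ := g⁻¹ x with hz
    have hgz : g z = x := Equiv.apply_symm_apply g x
    have hz_nb : ¬ IsBreakPt ⇑g z := by
      intro hbp
      have hzPZ : z ∈ PZ := (hS g hg).2 z hbp
      have hzB : z ∈ Bg g := breakPt_mem (hBg g hg) hbp
      have hzV : z ∈ V := ⟨μ z, Finset.mem_image_of_mem μ (Finset.mem_biUnion.mpr ⟨g, hg, hzB⟩),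
        (hμ z hzPZ).1, (hμ z hzPZ).2⟩
      obtain ⟨Az, hdz, hgz_eq⟩ := pointwise_mobius g hmono (hBg g hg) z
      apply hx
      have hm := hVfor Az z hzV hdz
      rw [← hgz_eq, hgz] at hm
      exact hm
    obtain ⟨U, hU, A, hA⟩ := not_not.mp hz_nb
    obtain ⟨U', hU'sub, hU'open, hzU'⟩ := mem_nhds_iff.mp hU
    have hopenmap : IsOpenMap ⇑g :=
      (StrictMono.orderIsoOfSurjective ⇑g hmono g.surjective).toHomeomorph.isOpenMap
    refine ⟨⇑g '' U', (hopenmap U' hU'open).mem_nhds ⟨z, hzU', hgz⟩, A⁻¹, ?_⟩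
    rintro y ⟨u, hu, rfl⟩
    obtain ⟨hdu, hgu⟩ := hA u (hU'sub hu)
    constructor
    · rw [mobiusDefinedAt_iff, hgu]
      exact den_inv_ne A u hdu
    · rw [hgu, mobius_inv A u hdu, ← hgu]
      exact Equiv.symm_apply_apply g u
  have key : ∀ g ∈ Subgroup.closure (↑S : Set (Equiv.Perm ℝ)), Good g ∧ Good g⁻¹ := by
    intro g hgc
    refine Subgroup.closure_induction (p := fun g _ => Good g ∧ Good g⁻¹)
      (fun g hg => ⟨hGood_gen g hg, hGood_inv_gen g hg⟩)
      ⟨hGood_one, by rw [inv_one]; exact hGood_one⟩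
      (fun x y _ _ hxg hyg => ⟨hGood_mul x y hxg.1 hyg.1,
        by rw [mul_inv_rev]; exact hGood_mul _ _ hyg.2 hxg.2⟩)
      (fun x _ hxg => ⟨hxg.2, by rw [inv_inv]; exact hxg.1⟩) hgc
  -- choose a large prime
  set N : ℕ := M.sup id with hN
  obtain ⟨p, hpN, hp⟩ := Nat.exists_infinite_primes (N + 1)
  have hpns : ¬ IsSquare p := irrational_sqrt_natCast_iff.mp hp.irrational_sqrt
  obtain ⟨f, hfHZ, hfU⟩ := pell_element_exists p hpns
  have hGoodf : Good f := (key f (hgen f hfHZ)).1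
  have hsp : Real.sqrt p ∉ V := by
    rintro ⟨m, hmM, hmns, hmQ⟩
    have hmN : m ≤ N := Finset.le_sup (f := id) hmM
    exact sqrt_prime_not_QS hp hmns (by omega) hmQ
  obtain ⟨U, hU, hlike⟩ := hGoodf (Real.sqrt p) hsp
  exact hfU U hU hlike


end
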